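/- arXiv:2401.07767 — 3 statements merged into one kernel-verified Lean document; each statement's English description precedes it below -/
import Mathlib

section
/- The minimizer of θ ↦ (1/2)(x - θ)² + P(θ), where P is the MCP penalty P(θ) = λ∫₀^|θ| (1 - t/(γλ))₊ dt with λ > 0 and γ > 1, equals (γ/(γ-1))·sign(x)·(|x|-λ)₊ when |x| ≤ λγ, and equals x when |x| > λγ. -/
open Real Set

/-- The MCP penalty `P^MCP_{λ,γ}(x) = λ ∫₀^{|x|} max(1 - t/(γλ), 0) dt`. -/
noncomputable def mcp (lam gam : ℝ) (x : ℝ) : ℝ :=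
  lam * ∫ t in (0:ℝ)..|x|, max (1 - t / (gam * lam)) 0

lemma part_int (c b : ℝ) (hc : 0 < c) (hb : 0 ≤ b) (hbc : b ≤ c) :
    ∫ t in (0:ℝ)..b, max (1 - t / c) 0 = b - b^2/(2*c) := by
  have h1 : ∫ t in (0:ℝ)..b, max (1 - t / c) 0 = ∫ t in (0:ℝ)..b, (1 - t / c) := by
    apply intervalIntegral.integral_congr
    intro t ht
    rw [Set.uIcc_of_le hb] at ht
    have h2 : t ≤ c := le_trans ht.2 hbc
    have : 0 ≤ 1 - t / c := by
      rw [sub_nonneg, div_le_one hc]; exact h2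
    exact max_eq_left this
  rw [h1, intervalIntegral.integral_sub intervalIntegrable_const
    (Continuous.intervalIntegrable (continuous_id'.div_const c) _ _)]
  simp [intervalIntegral.integral_div, integral_id]
  ring

lemma mcp_eq (lam gam : ℝ) (hlam : 0 < lam) (hgam : 1 < gam) (θ : ℝ) :
    mcp lam gam θ = gam * lam^2 / 2 - (max (gam * lam - |θ|) 0)^2 / (2 * gam) := by
  have hg0 : 0 < gam := lt_trans one_pos hgam
  have hc : 0 < gam * lam := by positivity
  have ha : 0 ≤ |θ| := abs_nonneg θ
  unfold mcp
  rcases le_total |θ| (gam * lam) with h | h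
  · rw [part_int _ _ hc ha h]
    have h2 : max (gam * lam - |θ|) 0 = gam * lam - |θ| := max_eq_left (by linarith)
    rw [h2]
    have hh : |θ|^2 = θ^2 := sq_abs θ
    field_simp
    ring
  · have hsplit : (∫ t in (0:ℝ)..(gam*lam), max (1 - t / (gam*lam)) 0)
        + ∫ t in (gam*lam)..|θ|, max (1 - t / (gam*lam)) 0
        = ∫ t in (0:ℝ)..|θ|, max (1 - t / (gam*lam)) 0 := by
      apply intervalIntegral.integral_add_adjacent_intervals <;>
        exact Continuous.intervalIntegrable
          (((continuous_const.sub (continuous_id'.div_const _)).max continuous_const)) _ _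
    have hz : ∫ t in (gam*lam)..|θ|, max (1 - t / (gam*lam)) 0 = 0 := by
      have : ∫ t in (gam*lam)..|θ|, max (1 - t / (gam*lam)) 0
          = ∫ t in (gam*lam)..|θ|, (0:ℝ) := by
        apply intervalIntegral.integral_congr
        intro t ht
        rw [Set.uIcc_of_le h] at ht
        have h2 : gam * lam ≤ t := ht.1
        have : 1 - t / (gam*lam) ≤ 0 := by
          rw [sub_nonpos, le_div_iff₀ hc]; linarith
        exact max_eq_right this
      rw [this, intervalIntegral.integral_zero]
    rw [← hsplit, hz, part_int _ _ hc hc.le le_rfl]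
    have h2 : max (gam * lam - |θ|) 0 = 0 := max_eq_right (by linarith)
    rw [h2]
    field_simp
    ring


set_option maxHeartbeats 1000000 in
/-- The minimizer of `θ ↦ (1/2)(x-θ)² + P^MCP_{λ,γ}(θ)` equals
`(γ/(γ-1))·sign(x)·(|x|-λ)₊` when `|x| ≤ λγ`, and equals `x` when `|x| > λγ`. -/
theorem mcp_prox (lam gam x : ℝ) (hlam : 0 < lam) (hgam : 1 < gam) :
    (|x| ≤ lam * gam →
      ∀ θ : ℝ,
        (1/2) * (x - (gam/(gam-1)) * (Real.sign x * max (|x| - lam) 0))^2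
            + mcp lam gam ((gam/(gam-1)) * (Real.sign x * max (|x| - lam) 0))
          ≤ (1/2) * (x - θ)^2 + mcp lam gam θ) ∧
    (lam * gam < |x| →
      ∀ θ : ℝ,
        (1/2) * (x - x)^2 + mcp lam gam x ≤ (1/2) * (x - θ)^2 + mcp lam gam θ) := by
  have hg0 : 0 < gam := lt_trans one_pos hgam
  have hg1 : 0 < gam - 1 := by linarith
  have hc : 0 < gam * lam := by positivity
  have hkey : ∀ p q A B : ℝ, q - p ≤ 2 * gam * (B - A) →
      A + (gam * lam ^ 2 / 2 - p / (2 * gam)) ≤ B + (gam * lam ^ 2 / 2 - q / (2 * gam)) := by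
    intro p q A B h
    have h2 : (q - p) / (2 * gam) ≤ B - A := by
      rw [div_le_iff₀ (by positivity)]
      linarith
    have h3 : (q - p) / (2 * gam) = q / (2 * gam) - p / (2 * gam) := by ring
    linarith
  constructor
  · intro hx θ
    rw [mcp_eq lam gam hlam hgam, mcp_eq lam gam hlam hgam]
    have hm0 : (0:ℝ) ≤ max (gam * lam - |θ|) 0 := le_max_right _ _
    have hmge : gam * lam - |θ| ≤ max (gam * lam - |θ|) 0 := le_max_left _ _
    have habs : |θ| ^ 2 = θ ^ 2 := sq_abs θ
    have hθ1 : θ ≤ |θ|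
    · exact le_abs_self θ
    have hθ0 : 0 ≤ |θ| := abs_nonneg θ
    rcases le_total |x| lam with hxl | hxl
    · -- θ* = 0
      have h0 : max (|x| - lam) 0 = 0 := max_eq_right (by linarith)
      rw [h0]
      simp only [mul_zero, abs_zero, sub_zero]
      have hM0 : max (gam * lam) 0 = gam * lam := max_eq_left hc.le
      rw [hM0]
      obtain ⟨hx1, hx2⟩ := abs_le.mp hxl
      have hxt : x * θ ≤ lam * |θ| := by
        calc x * θ ≤ |x * θ| := le_abs_self _
        _ = |x| * |θ| := abs_mul x θ
        _ ≤ lam * |θ| := by nlinarith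
      rcases max_choice (gam * lam - |θ|) 0 with hch | hch <;> rw [hch] <;> apply hkey
      · nlinarith [habs, mul_nonneg hg1.le (sq_nonneg θ), mul_nonneg hg0.le
          (sub_nonneg.mpr hxt)]
      · nlinarith [mul_nonneg hg0.le (sq_nonneg (x - θ)),
          mul_nonneg (by linarith : (0:ℝ) ≤ lam - x) (by linarith : (0:ℝ) ≤ lam + x),
          mul_nonneg (mul_nonneg hg0.le hg1.le) (mul_pos hlam hlam).le, hg0.le]
    · -- θ* = s * t, t = gam*(|x|-lam)/(gam-1)
      have hxne : x ≠ 0 := by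
        intro h; rw [h, abs_zero] at hxl; linarith
      have hs : Real.sign x = 1 ∨ Real.sign x = -1 := by
        rcases lt_trichotomy x 0 with h | h | h
        · right; exact Real.sign_of_neg h
        · exact absurd h hxne
        · left; exact Real.sign_of_pos h
      have hsx : Real.sign x * |x| = x := by
        rcases lt_trichotomy x 0 with h | h | h
        · rw [Real.sign_of_neg h, abs_of_neg h]; ring
        · exact absurd h hxne
        · rw [Real.sign_of_pos h, abs_of_pos h]; ring
      have hs2 : Real.sign x ^ 2 = 1 := by rcases hs with h | h <;> rw [h] <;> norm_num
      have hmax : max (|x| - lam) 0 = |x| - lam := max_eq_left (by linarith)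
      rw [hmax]
      set s := Real.sign x with hsdef
      set t := gam / (gam - 1) * (|x| - lam) with htdef
      have ht0 : 0 ≤ t := by
        apply mul_nonneg (by positivity) (by linarith)
      have hteq : t * (gam - 1) = gam * (|x| - lam) := by
        rw [htdef, div_mul_eq_mul_div, div_mul_cancel₀ _ hg1.ne']
      have htle : t ≤ gam * lam := by nlinarith
      have hstar : gam / (gam - 1) * (s * (|x| - lam)) = s * t := by
        rw [htdef]; ring
      rw [hstar]
      have habst : |s * t| = t := by
        rw [abs_mul]
        rcases hs with h | h <;> rw [h] <;> simp [abs_of_nonneg ht0]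
      rw [habst]
      have hMt : max (gam * lam - t) 0 = gam * lam - t := max_eq_left (by linarith)
      rw [hMt]
      clear_value s t
      have hx2 : x ^ 2 = |x| ^ 2 := (sq_abs x).symm
      have hxθ : (x - θ)^2 = |x|^2 - 2 * |x| * (s * θ) + θ^2 := by
        linear_combination hx2 + (2 * θ) * hsx
      have hxs : (x - s * t)^2 = (|x| - t)^2 := by
        linear_combination hx2 + (2 * t * s) * hsx + (t^2 - 2*t*|x|) * hs2
      have hsθ : s * θ ≤ |θ| := by
        calc s * θ ≤ |s * θ| := le_abs_self _
        _ = |s| * |θ| := abs_mul s θ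
        _ = |θ| := by rcases hs with h | h <;> rw [h] <;> simp
      have e2 : gam * (|x| ^ 2 - 2 * |x| * |θ| + |θ| ^ 2 - (|x| - t) ^ 2) + (gam * lam - t) ^ 2
          = (gam - 1) * (|θ| - t) ^ 2 + (gam * lam - |θ|) ^ 2 := by
        linear_combination 2 * (|θ| - t) * hteq
      rcases max_choice (gam * lam - |θ|) 0 with hch | hch <;> rw [hch] <;> apply hkey <;>
        rw [hxθ, hxs]
      · nlinarith [e2, habs, mul_nonneg hg1.le (sq_nonneg (|θ| - t)),
          mul_nonneg (mul_nonneg hg0.le (abs_nonneg x)) (sub_nonneg.mpr hsθ)]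
      · nlinarith [e2, habs, mul_nonneg hg1.le (sq_nonneg (|θ| - t)),
          sq_nonneg (gam*lam - |θ|),
          mul_nonneg (mul_nonneg hg0.le (abs_nonneg x)) (sub_nonneg.mpr hsθ)]
  · intro hx θ
    rw [mcp_eq lam gam hlam hgam, mcp_eq lam gam hlam hgam]
    have hMx : max (gam * lam - |x|) 0 = 0 := max_eq_right (by linarith)
    rw [hMx]
    have hxt : x * θ ≤ |x| * |θ| := by
      calc x * θ ≤ |x * θ| := le_abs_self _
      _ = |x| * |θ| := abs_mul x θ
    have hθ0 : 0 ≤ |θ| := abs_nonneg θ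
    have h1 : (x - θ)^2 = (|x| - |θ|)^2 + 2 * (|x| * |θ| - x * θ) := by
      linear_combination (-1 : ℝ) * sq_abs x - sq_abs θ
    rcases max_choice (gam * lam - |θ|) 0 with hch | hch <;> rw [hch] <;> apply hkey
    · have hvle : |θ| ≤ gam * lam := by
        have h4 := le_max_right (gam * lam - |θ|) (0:ℝ)
        rw [hch] at h4; linarith
      have h3 : (|x| - |θ|)^2 - (gam*lam - |θ|)^2
          = (|x| - gam*lam) * (|x| + gam*lam - 2*|θ|) := by ring
      nlinarith [h1, h3,
        mul_nonneg (by linarith : (0:ℝ) ≤ |x| - gam * lam)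
          (by linarith : (0:ℝ) ≤ |x| + gam * lam - 2 * |θ|),
        mul_nonneg hg1.le (sq_nonneg (x - θ)), sub_nonneg.mpr hxt]
    · nlinarith [sq_nonneg (x - θ), mul_nonneg hg1.le (sq_nonneg (x - θ))]
end

section
/- Fix a symmetric matrix Q and ψ > 0. The minimizer over symmetric positive definite Θ of tr(QΘ) - log det(Θ) + ψ‖Θ‖_F² is Θ* = (-Q + (Q² + 4ψ·2·I)^{1/2})/(4ψ), i.e., the unique positive definite solution of 2ψΘ² + QΘ = I obtained by the spectral mapping λ ↦ (-q + √(q² + 8ψ))/(4ψ) applied to the eigenvalues q of Q. -/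
open Matrix Real

section AuxEGG

variable {n : Type*} [Fintype n] [DecidableEq n]

lemma EGG.psd_trace_nonneg {A : Matrix n n ℝ} (hA : A.PosSemidef) : 0 ≤ A.trace := by
  rw [Matrix.trace]
  refine Finset.sum_nonneg fun i _ => ?_
  have := hA.dotProduct_mulVec_nonneg (Pi.single i 1)
  simpa [dotProduct, Matrix.mulVec_single, Pi.single_apply, Finset.sum_ite_eq] using this

lemma EGG.trace_mul_psd_nonneg {A B : Matrix n n ℝ} (hA : A.PosSemidef) (hB : B.PosSemidef) :
    0 ≤ (A * B).trace := by
  obtain ⟨C, rfl⟩ : ∃ C : Matrix n n ℝ, B = star C * C := by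
    open scoped MatrixOrder in exact CStarAlgebra.nonneg_iff_eq_star_mul_self.mp hB.nonneg
  have h1 : (A * (star C * C)).trace = (C * A * Cᴴ).trace := by
    rw [← mul_assoc, Matrix.trace_mul_comm, ← mul_assoc]; rfl
  rw [h1]
  exact EGG.psd_trace_nonneg (hA.mul_mul_conjTranspose_same C)

omit [DecidableEq n] in
lemma EGG.trace_sq_eq {X : Matrix n n ℝ} (hX : Xᵀ = X) :
    (X * X).trace = ∑ i, ∑ j, (X i j)^2 := by
  simp only [Matrix.trace, Matrix.diag, Matrix.mul_apply, sq]
  refine Finset.sum_congr rfl fun i _ => Finset.sum_congr rfl fun j _ => ?_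
  have h2 : X j i = X i j := by conv_lhs => rw [← hX, Matrix.transpose_apply]
  rw [h2]

omit [DecidableEq n] in
lemma EGG.trace_sq_nonneg {X : Matrix n n ℝ} (hX : Xᵀ = X) : 0 ≤ (X * X).trace := by
  rw [EGG.trace_sq_eq hX]
  exact Finset.sum_nonneg fun i _ => Finset.sum_nonneg fun j _ => sq_nonneg _

omit [DecidableEq n] in
lemma EGG.eq_zero_of_trace_sq {X : Matrix n n ℝ} (hX : Xᵀ = X) (h : (X * X).trace ≤ 0) :
    X = 0 := by
  have h0 : (X * X).trace = 0 := le_antisymm h (EGG.trace_sq_nonneg hX)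
  rw [EGG.trace_sq_eq hX] at h0
  ext i j
  have h1 := (Finset.sum_eq_zero_iff_of_nonneg (fun i _ => Finset.sum_nonneg
    fun j _ => sq_nonneg (X i j))).mp h0 i (Finset.mem_univ i)
  have h2 := (Finset.sum_eq_zero_iff_of_nonneg (fun j _ => sq_nonneg (X i j))).mp h1 j
    (Finset.mem_univ j)
  simpa [pow_eq_zero_iff] using h2

lemma EGG.conj_posDef {Θ S T : Matrix n n ℝ} (hΘ : Θ.PosDef) (hTS : T * S = 1) :
    (Sᵀ * Θ * S).PosDef := by
  refine Matrix.PosDef.of_dotProduct_mulVec_pos ?_ ?_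
  · have := Matrix.isHermitian_conjTranspose_mul_mul S hΘ.1
    simpa using this
  · intro x hx
    have hSx : S *ᵥ x ≠ 0 := by
      intro h
      apply hx
      have := congrArg (fun v => T *ᵥ v) h
      simpa [Matrix.mulVec_mulVec, hTS] using this
    have hpos := hΘ.dotProduct_mulVec_pos hSx
    have key : star x ⬝ᵥ ((Sᵀ * Θ * S) *ᵥ x) = star (S *ᵥ x) ⬝ᵥ (Θ *ᵥ (S *ᵥ x)) := by
      rw [Matrix.mul_assoc, ← Matrix.mulVec_mulVec, star_trivial, star_trivial,
        Matrix.dotProduct_mulVec, Matrix.vecMul_transpose, Matrix.mulVec_mulVec]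
    rw [key]
    exact hpos

lemma EGG.herm_trace_eq {A : Matrix n n ℝ} (hA : A.IsHermitian) :
    A.trace = ∑ i, hA.eigenvalues i := by
  rw [hA.trace_eq_sum_eigenvalues]
  simp

lemma EGG.logdet_le {P : Matrix n n ℝ} (hP : P.PosDef) :
    Real.log P.det ≤ P.trace - (Fintype.card n : ℝ) := by
  have hev := hP.eigenvalues_pos
  rw [hP.isHermitian.det_eq_prod_eigenvalues, EGG.herm_trace_eq hP.isHermitian]
  simp only [RCLike.ofReal_real_eq_id, id_eq]
  rw [Real.log_prod (fun i _ => (hev i).ne')]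
  calc ∑ i, Real.log (hP.isHermitian.eigenvalues i)
      ≤ ∑ i, (hP.isHermitian.eigenvalues i - 1) :=
        Finset.sum_le_sum fun i _ => Real.log_le_sub_one_of_pos (hev i)
    _ = ∑ i, hP.isHermitian.eigenvalues i - (Fintype.card n : ℝ) := by
        rw [Finset.sum_sub_distrib]; simp [Finset.card_univ]

lemma EGG.sum_smul_vecMulVec {p : ℕ} (u : Fin p → Fin p → ℝ) (c : Fin p → ℝ) :
    ∑ j, c j • Matrix.vecMulVec (u j) (u j)
      = (Matrix.of u)ᵀ * Matrix.diagonal c * (Matrix.of u) := by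
  rw [Matrix.mul_assoc]
  ext i k
  simp only [Matrix.sum_apply, Matrix.smul_apply, Matrix.vecMulVec_apply, smul_eq_mul,
    Matrix.mul_apply, Matrix.diagonal_apply, Matrix.transpose_apply, Matrix.of_apply,
    ite_mul, zero_mul, Finset.sum_ite_eq, Finset.mem_univ, if_true]
  exact Finset.sum_congr rfl fun j _ => by ring

end AuxEGG

/-- Closed-form Θ-update of the ADMM algorithm: for symmetric `Q = Σ_j q_j u_j u_jᵀ`
(orthonormal `u_j`) and `ψ > 0`, the matrix
`Θ* = Σ_j ((-q_j + √(q_j² + 8ψ))/(4ψ)) u_j u_jᵀ`, i.e. `(-Q + √(Q² + 8ψI))/(4ψ)`, is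
positive definite, is the unique solution of `2ψΘ² + QΘ = I`, and is the unique minimizer
of `Θ ↦ tr(QΘ) - log det Θ + ψ‖Θ‖_F²` over symmetric positive definite matrices. -/
theorem admm_theta_update {p : ℕ} (Q : Matrix (Fin p) (Fin p) ℝ) (hQ : Q.IsSymm)
    (ψ : ℝ) (hψ : 0 < ψ) (q : Fin p → ℝ) (u : Fin p → Fin p → ℝ)
    (hortho : ∀ i j, u i ⬝ᵥ u j = if i = j then (1 : ℝ) else 0)
    (hdecomp : Q = ∑ j, q j • Matrix.vecMulVec (u j) (u j))
    (Θstar : Matrix (Fin p) (Fin p) ℝ)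
    (hΘstar : Θstar = ∑ j, ((-q j + Real.sqrt ((q j)^2 + 8 * ψ)) / (4 * ψ)) •
      Matrix.vecMulVec (u j) (u j)) :
    Θstar.PosDef ∧ ((2 * ψ) • Θstar ^ 2 + Q * Θstar = 1) ∧
    (∀ Θ : Matrix (Fin p) (Fin p) ℝ, Θ.PosDef → (2 * ψ) • Θ ^ 2 + Q * Θ = 1 → Θ = Θstar) ∧
    (∀ Θ : Matrix (Fin p) (Fin p) ℝ, Θ.IsSymm → Θ.PosDef →
      ((Q * Θstar).trace - Real.log Θstar.det + ψ * (Θstar * Θstar).trace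
        ≤ (Q * Θ).trace - Real.log Θ.det + ψ * (Θ * Θ).trace) ∧
      ((Q * Θ).trace - Real.log Θ.det + ψ * (Θ * Θ).trace
        = (Q * Θstar).trace - Real.log Θstar.det + ψ * (Θstar * Θstar).trace → Θ = Θstar)) := by
  set U : Matrix (Fin p) (Fin p) ℝ := Matrix.of u with hU
  set g : Fin p → ℝ := fun j => (-q j + Real.sqrt ((q j)^2 + 8 * ψ)) / (4*ψ) with hg
  -- basic matrix algebra for conjugated diagonals
  have hUUt : U * Uᵀ = 1 := by
    ext i j
    simp only [hU, Matrix.mul_apply, Matrix.transpose_apply, Matrix.of_apply, Matrix.one_apply]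
    exact hortho i j
  have hUtU : Uᵀ * U = 1 := mul_eq_one_comm.mp hUUt
  have hMmul : ∀ c d : Fin p → ℝ, (Uᵀ * Matrix.diagonal c * U) * (Uᵀ * Matrix.diagonal d * U)
      = Uᵀ * Matrix.diagonal (fun j => c j * d j) * U := by
    intro c d
    calc (Uᵀ * Matrix.diagonal c * U) * (Uᵀ * Matrix.diagonal d * U)
        = Uᵀ * Matrix.diagonal c * (U * Uᵀ) * Matrix.diagonal d * U := by
          simp only [Matrix.mul_assoc]
      _ = Uᵀ * (Matrix.diagonal c * Matrix.diagonal d) * U := by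
          rw [hUUt]; simp only [Matrix.mul_one, Matrix.mul_assoc]
      _ = Uᵀ * Matrix.diagonal (fun j => c j * d j) * U := by
          rw [Matrix.diagonal_mul_diagonal]
  have hMadd : ∀ c d : Fin p → ℝ, (Uᵀ * Matrix.diagonal c * U) + (Uᵀ * Matrix.diagonal d * U)
      = Uᵀ * Matrix.diagonal (fun j => c j + d j) * U := by
    intro c d
    rw [show Matrix.diagonal (fun j => c j + d j) = Matrix.diagonal c + Matrix.diagonal d from
      (Matrix.diagonal_add c d).symm, Matrix.mul_add, Matrix.add_mul]
  have hMsmul : ∀ (a : ℝ) (c : Fin p → ℝ), a • (Uᵀ * Matrix.diagonal c * U)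
      = Uᵀ * Matrix.diagonal (fun j => a * c j) * U := by
    intro a c
    rw [show (fun j => a * c j) = a • c from rfl, Matrix.diagonal_smul,
      Matrix.mul_smul, Matrix.smul_mul]
  have hMone : Uᵀ * Matrix.diagonal (fun _ : Fin p => (1:ℝ)) * U = 1 := by
    rw [show Matrix.diagonal (fun _ : Fin p => (1:ℝ)) = 1 from Matrix.diagonal_one,
      Matrix.mul_one, hUtU]
  have hMtrans : ∀ c : Fin p → ℝ, (Uᵀ * Matrix.diagonal c * U)ᵀ = Uᵀ * Matrix.diagonal c * U := by
    intro c
    rw [Matrix.transpose_mul, Matrix.transpose_mul, Matrix.transpose_transpose,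
      Matrix.diagonal_transpose, Matrix.mul_assoc]
  have hMposDef : ∀ c : Fin p → ℝ, (∀ j, 0 < c j) → (Uᵀ * Matrix.diagonal c * U).PosDef :=
    fun c hc => EGG.conj_posDef (Matrix.PosDef.diagonal hc) hUtU
  have hQM : Q = Uᵀ * Matrix.diagonal q * U := by
    rw [hdecomp, EGG.sum_smul_vecMulVec]
  have hTM : Θstar = Uᵀ * Matrix.diagonal g * U := by
    rw [hΘstar, EGG.sum_smul_vecMulVec]
  -- scalar facts
  have hgpos : ∀ j, 0 < g j := by
    intro j
    have hs : (0:ℝ) < (q j)^2 + 8*ψ := by positivity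
    have hs2 : Real.sqrt ((q j)^2+8*ψ)^2 = (q j)^2+8*ψ := Real.sq_sqrt hs.le
    have hsp : 0 < Real.sqrt ((q j)^2+8*ψ) := Real.sqrt_pos.mpr hs
    exact div_pos (by nlinarith [hs2, hsp]) (by linarith)
  have hgeq : ∀ j, 2*ψ*(g j * g j) + q j * g j = 1 := by
    intro j
    have hs : (0:ℝ) < (q j)^2 + 8*ψ := by positivity
    have hs2 : Real.sqrt ((q j)^2+8*ψ)^2 = (q j)^2+8*ψ := Real.sq_sqrt hs.le
    simp only [hg]
    field_simp
    have hs3 : Real.sqrt ((q j)^2+ψ*8)^2 = (q j)^2+ψ*8 := Real.sq_sqrt (by positivity)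
    nlinarith [hs2, hs3]
  -- Part 1
  have part1 : Θstar.PosDef := by
    rw [hTM]; exact hMposDef g hgpos
  -- Part 2
  have part2 : (2 * ψ) • Θstar ^ 2 + Q * Θstar = 1 := by
    rw [hTM, hQM, sq, hMmul, hMmul, hMsmul, hMadd,
      show (fun j => 2*ψ*(g j * g j) + q j * g j) = (fun _ : Fin p => (1:ℝ)) from
        funext hgeq, hMone]
  refine ⟨part1, part2, ?_, ?_⟩
  -- Part 3: uniqueness of the positive definite solution
  · intro Θ hΘ heq
    set A : Matrix (Fin p) (Fin p) ℝ := (2*ψ) • Θ + Q with hA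
    have h1 : A * Θ = 1 := by
      rw [hA, Matrix.add_mul, Matrix.smul_mul, ← pow_two]; exact heq
    have h2 : Θ * A = 1 := mul_eq_one_comm.mp h1
    have hAX : A * (Θ - Θstar) + (2*ψ) • ((Θ - Θstar) * Θstar)
        = (A * Θ) - ((2*ψ) • Θstar^2 + Q * Θstar) := by
      simp only [hA, Matrix.mul_sub, Matrix.sub_mul, Matrix.add_mul, Matrix.smul_mul,
        smul_sub, pow_two]
      abel
    rw [h1, part2, sub_self] at hAX
    have hX : (Θ - Θstar) = -((2*ψ) • (Θ * ((Θ - Θstar) * Θstar))) := by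
      calc Θ - Θstar = Θ * (A * (Θ - Θstar)) := by
            rw [← Matrix.mul_assoc, h2, Matrix.one_mul]
        _ = Θ * (-((2*ψ) • ((Θ - Θstar) * Θstar))) := by
            rw [eq_neg_of_add_eq_zero_left hAX]
        _ = -((2*ψ) • (Θ * ((Θ - Θstar) * Θstar))) := by
            rw [Matrix.mul_neg, Matrix.mul_smul]
    have hXsym : (Θ - Θstar)ᵀ = Θ - Θstar := by
      rw [Matrix.transpose_sub]
      have e1 : Θᵀ = Θ := by simpa using hΘ.1.eq
      have e2 : Θstarᵀ = Θstar := by simpa using part1.1.eq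
      rw [e1, e2]
    have hpsd : ((Θ - Θstar) * Θ * (Θ - Θstar)).PosSemidef := by
      have := hΘ.posSemidef.mul_mul_conjTranspose_same (Θ - Θstar)
      simpa [hXsym] using this
    have h0 : 0 ≤ (Θstar * ((Θ - Θstar) * Θ * (Θ - Θstar))).trace :=
      EGG.trace_mul_psd_nonneg part1.posSemidef hpsd
    have htr : ((Θ - Θstar) * (Θ - Θstar)).trace ≤ 0 := by
      conv_lhs => rw [show ((Θ - Θstar) * (Θ - Θstar)) =
        (Θ - Θstar) * -((2*ψ) • (Θ * ((Θ - Θstar) * Θstar))) from by rw [← hX]]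
      rw [Matrix.mul_neg, Matrix.mul_smul, Matrix.trace_neg, Matrix.trace_smul]
      have hre : ((Θ - Θstar) * (Θ * ((Θ - Θstar) * Θstar))).trace
          = (Θstar * ((Θ - Θstar) * Θ * (Θ - Θstar))).trace := by
        rw [show (Θ - Θstar) * (Θ * ((Θ - Θstar) * Θstar))
            = ((Θ - Θstar) * Θ * (Θ - Θstar)) * Θstar from by simp only [Matrix.mul_assoc],
          Matrix.trace_mul_comm]
      rw [hre]
      simp only [smul_eq_mul]
      nlinarith [h0]
    have := EGG.eq_zero_of_trace_sq hXsym htr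
    exact sub_eq_zero.mp this
  -- Part 4: optimality
  · intro Θ hΘsymm hΘ
    set a : Fin p → ℝ := fun j => 2*ψ * g j + q j with ha
    have hapos : ∀ j, 0 < a j := by
      intro j
      have h1 : a j * g j = 1 := by
        simp only [ha]; linear_combination hgeq j
      have := hgpos j
      nlinarith [h1]
    set A : Matrix (Fin p) (Fin p) ℝ := (2*ψ) • Θstar + Q with hA
    have hAM : A = Uᵀ * Matrix.diagonal a * U := by
      rw [hA, hTM, hQM, hMsmul, hMadd]
    have hAΘstar : A * Θstar = 1 := by
      rw [hA, Matrix.add_mul, Matrix.smul_mul, ← pow_two]; exact part2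
    have hApos : A.PosDef := by rw [hAM]; exact hMposDef a hapos
    -- square root of A
    set t : Fin p → ℝ := fun j => Real.sqrt (a j) with ht
    set S : Matrix (Fin p) (Fin p) ℝ := Uᵀ * Matrix.diagonal t * U with hS
    have hSS : S * S = A := by
      rw [hS, hMmul, hAM,
        show (fun j => t j * t j) = a from funext fun j => Real.mul_self_sqrt (hapos j).le]
    have hTS : (Uᵀ * Matrix.diagonal (fun j => (t j)⁻¹) * U) * S = 1 := by
      rw [hS, hMmul,
        show (fun j => (t j)⁻¹ * t j) = (fun _ : Fin p => (1:ℝ)) from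
          funext fun j => inv_mul_cancel₀ (Real.sqrt_pos.mpr (hapos j)).ne', hMone]
    have hStrans : Sᵀ = S := by rw [hS]; exact hMtrans t
    set P : Matrix (Fin p) (Fin p) ℝ := Sᵀ * Θ * S with hP
    have hPpos : P.PosDef := EGG.conj_posDef hΘ hTS
    have hPdet : P.det = A.det * Θ.det := by
      rw [hP, Matrix.det_mul, Matrix.det_mul, Matrix.det_transpose]
      rw [show S.det * Θ.det * S.det = (S.det * S.det) * Θ.det from by ring,
        ← Matrix.det_mul, hSS]
    have hPtrace : P.trace = (A * Θ).trace := by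
      rw [hP, hStrans, Matrix.trace_mul_comm, ← Matrix.mul_assoc, hSS]
    have hlog := EGG.logdet_le hPpos
    rw [hPdet, hPtrace] at hlog
    simp only [Fintype.card_fin] at hlog
    -- determinant facts
    have hdetT : 0 < Θstar.det := part1.det_pos
    have hdetΘ : 0 < Θ.det := hΘ.det_pos
    have hdetA : 0 < A.det := hApos.det_pos
    have hAdetT : A.det * Θstar.det = 1 := by
      rw [← Matrix.det_mul, hAΘstar, Matrix.det_one]
    have hlogA : Real.log A.det = - Real.log Θstar.det := by
      rw [show A.det = Θstar.det⁻¹ from eq_inv_of_mul_eq_one_left hAdetT, Real.log_inv]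
    rw [Real.log_mul hdetA.ne' hdetΘ.ne', hlogA] at hlog
    -- trace identities
    have e1 : (A * Θ).trace = 2*ψ*(Θstar*Θ).trace + (Q*Θ).trace := by
      rw [hA, Matrix.add_mul, Matrix.smul_mul, Matrix.trace_add, Matrix.trace_smul]
      simp only [smul_eq_mul]
    have e2 : 2*ψ*(Θstar*Θstar).trace + (Q*Θstar).trace = p := by
      have : (A * Θstar).trace = (p:ℝ) := by
        rw [hAΘstar, Matrix.trace_one, Fintype.card_fin]
      rw [← this, hA, Matrix.add_mul, Matrix.smul_mul, Matrix.trace_add, Matrix.trace_smul]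
      simp only [smul_eq_mul]
    have hXsym : (Θ - Θstar)ᵀ = Θ - Θstar := by
      rw [Matrix.transpose_sub, hΘsymm]
      have e : Θstarᵀ = Θstar := by simpa using part1.1.eq
      rw [e]
    have e4 : (Θ*Θ).trace = ((Θ - Θstar)*(Θ - Θstar)).trace + 2*(Θstar*Θ).trace
        - (Θstar*Θstar).trace := by
      simp only [Matrix.sub_mul, Matrix.mul_sub, Matrix.trace_sub]
      rw [Matrix.trace_mul_comm Θ Θstar]
      ring
    have e4ψ : ψ * (Θ*Θ).trace = ψ * ((Θ - Θstar)*(Θ - Θstar)).trace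
        + 2*ψ*(Θstar*Θ).trace - ψ*(Θstar*Θstar).trace := by
      rw [e4]; ring
    have e5 : 0 ≤ ((Θ - Θstar)*(Θ - Θstar)).trace := EGG.trace_sq_nonneg hXsym
    have hψr : 0 ≤ ψ * ((Θ - Θstar)*(Θ - Θstar)).trace := mul_nonneg hψ.le e5
    constructor
    · rw [e1] at hlog
      linarith [hlog, e2, e4ψ, hψr]
    · intro heq
      rw [e1] at hlog
      have hr : ψ * ((Θ - Θstar)*(Θ - Θstar)).trace ≤ 0 := by
        linarith [hlog, e2, e4ψ, heq]
      have hr0 : ((Θ - Θstar)*(Θ - Θstar)).trace ≤ 0 := by nlinarith [hr, e5]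
      have := EGG.eq_zero_of_trace_sq hXsym hr0
      exact sub_eq_zero.mp this
end

section
/- Let A be a p×p real symmetric matrix with eigendecomposition A = Σ_j σ_j u_j u_jᵀ and let δ > 0. Then [A, δ]₊ := Σ_j max(σ_j, δ) u_j u_jᵀ is the unique minimizer of ‖Γ - A‖_F² over symmetric matrices Γ with smallest eigenvalue at least δ. -/
open Matrix Real

lemma aux_scalar {s d t : ℝ} (ht : d ≤ t) :
    (max s d - s)^2 ≤ (t - s)^2 ∧ ((t - s)^2 = (max s d - s)^2 → t = max s d) := by
  rcases le_total d s with h | h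
  · rw [max_eq_left h]
    constructor
    · nlinarith
    · intro he; nlinarith [sq_nonneg (t - s)]
  · rw [max_eq_right h]
    constructor
    · nlinarith
    · intro he; nlinarith [sq_nonneg (t - d)]

lemma aux_sum_vec {p : ℕ} (u : Fin p → Fin p → ℝ) (c : Fin p → ℝ) :
    ∑ j, c j • Matrix.vecMulVec (u j) (u j) =
      (Matrix.of u)ᵀ * Matrix.diagonal c * Matrix.of u := by
  ext i k
  simp only [Matrix.sum_apply, Matrix.smul_apply, Matrix.vecMulVec_apply, smul_eq_mul,
    Matrix.mul_apply, Matrix.diagonal_apply, Matrix.transpose_apply, Matrix.of_apply,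
    mul_ite, mul_zero, ite_mul, zero_mul, Finset.sum_ite_eq, Finset.sum_ite_eq',
    Finset.mem_univ, if_true]
  exact Finset.sum_congr rfl fun j _ => by ring

lemma aux_trace_sq {p : ℕ} (N : Matrix (Fin p) (Fin p) ℝ) :
    (Nᵀ * N).trace = ∑ x : Fin p × Fin p, (N x.1 x.2)^2 := by
  rw [Fintype.sum_prod_type]
  simp only [Matrix.trace, Matrix.diag_apply, Matrix.mul_apply, Matrix.transpose_apply, sq]
  exact Finset.sum_comm

lemma aux_conj_trace {p : ℕ} (U N : Matrix (Fin p) (Fin p) ℝ) (hUU : U * Uᵀ = 1) :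
    ((Uᵀ * N * U)ᵀ * (Uᵀ * N * U)).trace = (Nᵀ * N).trace := by
  have h1 : (Uᵀ * N * U)ᵀ = Uᵀ * Nᵀ * U := by
    rw [Matrix.transpose_mul, Matrix.transpose_mul, Matrix.transpose_transpose, Matrix.mul_assoc]
  rw [h1]
  have h2 : Uᵀ * Nᵀ * U * (Uᵀ * N * U) = Uᵀ * (Nᵀ * N) * U := by
    have : Uᵀ * Nᵀ * U * (Uᵀ * N * U) = Uᵀ * Nᵀ * (U * Uᵀ) * N * U := by
      simp only [Matrix.mul_assoc]
    rw [this, hUU, Matrix.mul_one]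
    simp only [Matrix.mul_assoc]
  rw [h2, Matrix.trace_mul_comm, ← Matrix.mul_assoc, ← Matrix.mul_assoc, hUU, Matrix.one_mul]

lemma aux_recover {p : ℕ} (U N : Matrix (Fin p) (Fin p) ℝ) (hUtU : Uᵀ * U = 1) :
    Uᵀ * (U * N * Uᵀ) * U = N := by
  simp only [← Matrix.mul_assoc]
  rw [hUtU, Matrix.one_mul, Matrix.mul_assoc, hUtU, Matrix.mul_one]

lemma aux_diag_ge {p : ℕ} (N : Matrix (Fin p) (Fin p) ℝ) (δ : ℝ)
    (h : (N - δ • (1 : Matrix (Fin p) (Fin p) ℝ)).PosSemidef) (i : Fin p) : δ ≤ N i i := by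
  have := (Matrix.posSemidef_iff_dotProduct_mulVec.mp h).2 (Pi.single i 1)
  simp [Matrix.mulVec, dotProduct, Pi.single_apply, Finset.mul_sum,
    Matrix.sub_apply, Matrix.smul_apply, Matrix.one_apply] at this
  linarith

/-- Closed-form Γ-update of the ADMM algorithm: for symmetric `A = Σ_j σ_j u_j u_jᵀ`
(orthonormal `u_j`) and `δ > 0`, the matrix `[A, δ]₊ = Σ_j max(σ_j, δ) u_j u_jᵀ` is the
unique minimizer of `‖Γ - A‖_F²` over symmetric matrices `Γ` with smallest eigenvalue at
least `δ` (i.e. `Γ - δI` positive semidefinite). -/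
theorem eigenvalue_truncation_projection {p : ℕ} (A : Matrix (Fin p) (Fin p) ℝ)
    (hA : A.IsSymm) (δ : ℝ) (hδ : 0 < δ) (σ : Fin p → ℝ) (u : Fin p → Fin p → ℝ)
    (hortho : ∀ i j, u i ⬝ᵥ u j = if i = j then (1 : ℝ) else 0)
    (hdecomp : A = ∑ j, σ j • Matrix.vecMulVec (u j) (u j))
    (Γstar : Matrix (Fin p) (Fin p) ℝ)
    (hΓstar : Γstar = ∑ j, max (σ j) δ • Matrix.vecMulVec (u j) (u j)) :
    Γstar.IsSymm ∧ (Γstar - δ • (1 : Matrix (Fin p) (Fin p) ℝ)).PosSemidef ∧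
    (∀ Γ : Matrix (Fin p) (Fin p) ℝ, Γ.IsSymm →
      (Γ - δ • (1 : Matrix (Fin p) (Fin p) ℝ)).PosSemidef →
      (((Γstar - A)ᵀ * (Γstar - A)).trace ≤ ((Γ - A)ᵀ * (Γ - A)).trace) ∧
      (((Γ - A)ᵀ * (Γ - A)).trace = ((Γstar - A)ᵀ * (Γstar - A)).trace → Γ = Γstar)) := by
  set U : Matrix (Fin p) (Fin p) ℝ := Matrix.of u with hU
  have hUU : U * Uᵀ = 1 := by
    ext i j
    simpa [Matrix.mul_apply, Matrix.one_apply, dotProduct, hU] using hortho i j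
  have hUtU : Uᵀ * U = 1 := mul_eq_one_comm.mp hUU
  set D : Matrix (Fin p) (Fin p) ℝ := Matrix.diagonal σ with hD
  set Dm : Matrix (Fin p) (Fin p) ℝ := Matrix.diagonal (fun j => max (σ j) δ) with hDm
  have hA' : A = Uᵀ * D * U := hdecomp.trans (aux_sum_vec u σ)
  have hΓ' : Γstar = Uᵀ * Dm * U := hΓstar.trans (aux_sum_vec u (fun j => max (σ j) δ))
  have hsym : Γstar.IsSymm := by
    rw [Matrix.IsSymm, hΓ', Matrix.transpose_mul, Matrix.transpose_mul,
      Matrix.transpose_transpose, Matrix.diagonal_transpose, Matrix.mul_assoc]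
  have hδ1 : Uᵀ * (δ • (1 : Matrix (Fin p) (Fin p) ℝ)) * U
      = δ • (1 : Matrix (Fin p) (Fin p) ℝ) := by
    rw [Matrix.mul_smul, Matrix.mul_one, Matrix.smul_mul, hUtU]
  have hconjform : Γstar - δ • (1 : Matrix (Fin p) (Fin p) ℝ)
      = Uᵀ * Matrix.diagonal (fun j => max (σ j) δ - δ) * U := by
    rw [hΓ', ← hδ1, ← Matrix.sub_mul, ← Matrix.mul_sub, hDm,
      Matrix.smul_one_eq_diagonal, ← Matrix.diagonal_sub]
  have hpsd : (Γstar - δ • (1 : Matrix (Fin p) (Fin p) ℝ)).PosSemidef := by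
    rw [hconjform]
    have hd : (Matrix.diagonal (fun j => max (σ j) δ - δ)).PosSemidef :=
      Matrix.posSemidef_diagonal_iff.mpr fun i => by
        simp [le_max_right (σ i) δ]
    have := hd.conjTranspose_mul_mul_same U
    rwa [Matrix.conjTranspose_eq_transpose_of_trivial] at this
  refine ⟨hsym, hpsd, fun Γ hΓsym hΓpsd => ?_⟩
  set M : Matrix (Fin p) (Fin p) ℝ := U * Γ * Uᵀ with hM
  have hΓrec : Γ = Uᵀ * M * U := (aux_recover U Γ hUtU).symm
  -- M - δ•1 is PSD
  have hMpsd : (M - δ • (1 : Matrix (Fin p) (Fin p) ℝ)).PosSemidef := by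
    have h1 : M - δ • (1 : Matrix (Fin p) (Fin p) ℝ)
        = U * (Γ - δ • (1 : Matrix (Fin p) (Fin p) ℝ)) * Uᵀ := by
      rw [Matrix.mul_sub, Matrix.sub_mul, Matrix.mul_smul, Matrix.mul_one, Matrix.smul_mul, hUU]
    rw [h1]
    have := hΓpsd.conjTranspose_mul_mul_same Uᵀ
    rwa [Matrix.conjTranspose_eq_transpose_of_trivial, Matrix.transpose_transpose] at this
  have hMd : ∀ i, δ ≤ M i i := aux_diag_ge M δ hMpsd
  -- rewrite both traces as sums
  have hGA : Γ - A = Uᵀ * (M - D) * U := by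
    rw [hΓrec, hA', ← Matrix.sub_mul, ← Matrix.mul_sub]
  have hSA : Γstar - A = Uᵀ * (Dm - D) * U := by
    rw [hΓ', hA', ← Matrix.sub_mul, ← Matrix.mul_sub]
  have hFG : ((Γ - A)ᵀ * (Γ - A)).trace = ∑ x : Fin p × Fin p, ((M - D) x.1 x.2)^2 := by
    rw [hGA, aux_conj_trace U (M - D) hUU, aux_trace_sq]
  have hFS : ((Γstar - A)ᵀ * (Γstar - A)).trace
      = ∑ x : Fin p × Fin p, ((Dm - D) x.1 x.2)^2 := by
    rw [hSA, aux_conj_trace U (Dm - D) hUU, aux_trace_sq]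
  have hpt : ∀ x ∈ (Finset.univ : Finset (Fin p × Fin p)),
      ((Dm - D) x.1 x.2)^2 ≤ ((M - D) x.1 x.2)^2 := by
    intro x _
    by_cases h : x.1 = x.2
    · have hdd : (Dm - D) x.1 x.2 = max (σ x.1) δ - σ x.1 := by
        simp [hDm, hD, Matrix.sub_apply, Matrix.diagonal_apply, h]
      have hmd : (M - D) x.1 x.2 = M x.1 x.2 - σ x.1 := by
        simp [hD, Matrix.sub_apply, Matrix.diagonal_apply, h]
      rw [hdd, hmd, ← h]
      exact (aux_scalar (hMd x.1)).1
    · have : (Dm - D) x.1 x.2 = 0 := by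
        simp [hDm, hD, Matrix.sub_apply, Matrix.diagonal_apply, h]
      rw [this]
      simpa using sq_nonneg ((M - D) x.1 x.2)
  constructor
  · rw [hFG, hFS]
    exact Finset.sum_le_sum hpt
  · intro heq
    rw [hFG, hFS] at heq
    have hall := (Finset.sum_eq_sum_iff_of_le hpt).mp heq.symm
    have hMeq : M = Dm := by
      ext i j
      have := hall (i, j) (Finset.mem_univ _)
      by_cases h : i = j
      · subst h
        have hdd : (Dm - D) i i = max (σ i) δ - σ i := by
          simp [hDm, hD, Matrix.sub_apply, Matrix.diagonal_apply]
        have hmd : (M - D) i i = M i i - σ i := by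
          simp [hD, Matrix.sub_apply, Matrix.diagonal_apply]
        rw [hdd, hmd] at this
        have := (aux_scalar (hMd i)).2 this.symm
        simpa [hDm, Matrix.diagonal_apply] using this
      · have hdd : (Dm - D) i j = 0 := by
          simp [hDm, hD, Matrix.sub_apply, Matrix.diagonal_apply, h]
        have hmd : (M - D) i j = M i j := by
          simp [hD, Matrix.sub_apply, Matrix.diagonal_apply, h]
        rw [hdd, hmd] at this
        have : M i j = 0 := by nlinarith [this.symm]
        simp [this, hDm, Matrix.diagonal_apply, h]
    rw [hΓrec, hMeq, ← hΓ']
end
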